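/- The maximum absolute determinant of an n×n upper Hessenberg matrix with subdiagonal entries fixed at 1 and upper-triangular entries from {0,1,…,d} (d a positive integer) equals M_n, where M_1 = d, M_2 = d², and M_n = d·M_{n−1} + M_{n−2} for n ≥ 3. -/
import Mathlib


/-- `A` is an `n×n` upper Hessenberg matrix with subdiagonal entries `1`
and upper-triangular entries in `{0,1,…,d}`. -/
def IsUpperHessenbergRange (d : ℕ) {n : ℕ} (A : Matrix (Fin n) (Fin n) ℝ) : Prop :=
  (∀ i j : Fin n, (i : ℕ) = (j : ℕ) + 1 → A i j = 1) ∧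
  (∀ i j : Fin n, (j : ℕ) + 1 < (i : ℕ) → A i j = 0) ∧
  (∀ i j : Fin n, (i : ℕ) ≤ (j : ℕ) → ∃ k : ℕ, k ≤ d ∧ A i j = (k : ℝ))

/-- `M 1 = d`, `M 2 = d²`, `M n = d·M (n-1) + M (n-2)`. -/
def seqMd (d : ℕ) : ℕ → ℝ
  | 0 => 1
  | 1 => (d : ℝ)
  | 2 => (d : ℝ) ^ 2
  | (n + 3) => (d : ℝ) * seqMd d (n + 2) + seqMd d (n + 1)

namespace MaxDetAux

lemma hess_lead {n m : ℕ} {d : ℕ} {A : Matrix (Fin n) (Fin n) ℝ}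
    (hA : IsUpperHessenbergRange d A) (hm : m ≤ n) :
    IsUpperHessenbergRange d (A.submatrix (Fin.castLE hm) (Fin.castLE hm)) := by
  refine ⟨fun i j hij => hA.1 _ _ (by simpa using hij),
    fun i j hij => hA.2.1 _ _ (by simpa using hij),
    fun i j hij => hA.2.2 _ _ (by simpa using hij)⟩

def Hess0 {n : ℕ} (A : Matrix (Fin n) (Fin n) ℝ) : Prop :=
  (∀ i j : Fin n, (i : ℕ) = (j : ℕ) + 1 → A i j = 1) ∧
  (∀ i j : Fin n, (j : ℕ) + 1 < (i : ℕ) → A i j = 0)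
def lead {n : ℕ} (A : Matrix (Fin n) (Fin n) ℝ) {k : ℕ} (h : k ≤ n) :
    Matrix (Fin k) (Fin k) ℝ := A.submatrix (Fin.castLE h) (Fin.castLE h)
def Dl {n : ℕ} (A : Matrix (Fin n) (Fin n) ℝ) (k : ℕ) : ℝ :=
  if h : k ≤ n then (lead A h).det else 0
lemma Dl_of_le {n : ℕ} (A : Matrix (Fin n) (Fin n) ℝ) {k : ℕ} (h : k ≤ n) :
    Dl A k = (lead A h).det := dif_pos h
lemma lead_self {n : ℕ} (A : Matrix (Fin n) (Fin n) ℝ) : lead A (le_refl n) = A := by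
  ext i j; simp only [lead, Matrix.submatrix_apply]; congr 1
lemma Dl_self {n : ℕ} (A : Matrix (Fin n) (Fin n) ℝ) : Dl A n = A.det := by
  rw [Dl_of_le A (le_refl n), lead_self]
lemma Dl_zero {n : ℕ} (A : Matrix (Fin n) (Fin n) ℝ) : Dl A 0 = 1 := by
  rw [Dl_of_le A (Nat.zero_le n)]; exact Matrix.det_fin_zero

lemma lead_lead {n m k : ℕ} (A : Matrix (Fin n) (Fin n) ℝ) (hm : m ≤ n) (hk : k ≤ m) :
    lead (lead A hm) hk = lead A (hk.trans hm) := by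
  ext i j
  simp only [lead, Matrix.submatrix_apply]
  congr 1

lemma Dl_lead {n m : ℕ} (A : Matrix (Fin n) (Fin n) ℝ) (hm : m ≤ n) {k : ℕ} (hk : k ≤ m) :
    Dl (lead A hm) k = Dl A k := by
  rw [Dl_of_le _ hk, Dl_of_le _ (hk.trans hm), lead_lead]

lemma det_expand : ∀ {n : ℕ} (A : Matrix (Fin (n+1)) (Fin (n+1)) ℝ), Hess0 A →
    A.det = ∑ i : Fin (n+1), (-1:ℝ)^(n - (i:ℕ)) * A i (Fin.last n) * Dl A (i:ℕ) := by
  intro n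
  induction n with
  | zero =>
    intro A _
    simp [Matrix.det_fin_one, Dl_zero, Fin.last]
  | succ m ih =>
    intro A hA
    rw [Matrix.det_succ_row A (Fin.last (m+1))]
    -- reduce to two terms
    set j0 : Fin (m+2) := ⟨m, by omega⟩ with hj0
    have hne : j0 ≠ Fin.last (m+1) := by
      simp [hj0, Fin.ext_iff, Fin.last]
    have hsum : ∑ j : Fin (m+2), (-1:ℝ)^((Fin.last (m+1) : ℕ) + (j:ℕ)) * A (Fin.last (m+1)) j *
          (A.submatrix (Fin.last (m+1)).succAbove j.succAbove).det
        = ((-1:ℝ)^((Fin.last (m+1) : ℕ) + (j0:ℕ)) * A (Fin.last (m+1)) j0 *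
            (A.submatrix (Fin.last (m+1)).succAbove j0.succAbove).det)
          + ((-1:ℝ)^((Fin.last (m+1) : ℕ) + (Fin.last (m+1) :ℕ)) * A (Fin.last (m+1)) (Fin.last (m+1)) *
            (A.submatrix (Fin.last (m+1)).succAbove (Fin.last (m+1)).succAbove).det) := by
      rw [show (∑ j : Fin (m+2), (-1:ℝ)^((Fin.last (m+1) : ℕ) + (j:ℕ)) * A (Fin.last (m+1)) j *
          (A.submatrix (Fin.last (m+1)).succAbove j.succAbove).det)
          = ∑ j ∈ ({j0, Fin.last (m+1)} : Finset (Fin (m+2))),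
            (-1:ℝ)^((Fin.last (m+1) : ℕ) + (j:ℕ)) * A (Fin.last (m+1)) j *
            (A.submatrix (Fin.last (m+1)).succAbove j.succAbove).det
          from (Finset.sum_subset (Finset.subset_univ _) ?_).symm, Finset.sum_pair hne]
      intro j _ hj
      have h1 : (j:ℕ) ≠ m := by
        intro h; exact hj (by simp [hj0, Finset.mem_insert, Fin.ext_iff, h])
      have h2 : (j:ℕ) ≠ m+1 := by
        intro h; exact hj (by simp [Finset.mem_insert, Fin.ext_iff, Fin.last, h])
      have hz : A (Fin.last (m+1)) j = 0 := by
        apply hA.2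
        simp only [Fin.val_last]
        omega
      rw [hz]; ring
    rw [hsum]
    have hsA : (Fin.last (m+1)).succAbove = Fin.castSucc := Fin.succAbove_last
    have hval : ∀ c : Fin (m+1), ((j0.succAbove c : Fin (m+2)) : ℕ)
        = if (c:ℕ) < m then (c:ℕ) else (c:ℕ)+1 := by
      intro c
      rcases lt_or_ge (c:ℕ) m with h | h
      · rw [Fin.succAbove_of_castSucc_lt, if_pos h]
        · simp
        · simpa [Fin.lt_iff_val_lt_val, hj0] using h
      · rw [Fin.succAbove_of_le_castSucc, if_neg (by omega)]
        · simp
        · simpa [Fin.le_iff_val_le_val, hj0] using h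
    -- the deleted-column minor
    set B : Matrix (Fin (m+1)) (Fin (m+1)) ℝ := A.submatrix Fin.castSucc j0.succAbove with hB
    have hBH : Hess0 B := by
      constructor
      · intro i j hij
        have hi : (i:ℕ) < m+1 := i.isLt
        have hj : (j:ℕ) < m := by omega
        have : B i j = A i.castSucc (j0.succAbove j) := rfl
        rw [this]
        apply hA.1
        simp only [Fin.coe_castSucc]
        rw [hval j, if_pos hj]
        exact hij
      · intro i j hij
        have hi : (i:ℕ) < m+1 := i.isLt
        have : B i j = A i.castSucc (j0.succAbove j) := rfl
        rw [this]
        apply hA.2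
        simp only [Fin.coe_castSucc]
        rw [hval j, if_pos (by omega)]
        exact hij
    have hDlB : ∀ k : ℕ, k ≤ m → Dl B k = Dl A k := by
      intro k hk
      rw [Dl_of_le B (by omega : k ≤ m+1), Dl_of_le A (by omega : k ≤ m+2)]
      congr 1
      ext r c
      simp only [lead, Matrix.submatrix_apply, hB]
      congr 1 <;> refine Fin.ext ?_ <;>
        first
          | (simp only [Fin.coe_castSucc, Fin.coe_castLE]; done)
          | (rw [hval]; have := c.isLt; simp only [Fin.coe_castLE]; rw [if_pos (by omega)])
    have hBlast : ∀ i : Fin (m+1), B i (Fin.last m) = A i.castSucc (Fin.last (m+1)) := by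
      intro i
      have : B i (Fin.last m) = A i.castSucc (j0.succAbove (Fin.last m)) := rfl
      rw [this]
      congr 1
      refine Fin.ext ?_
      rw [hval]
      simp
    rw [hsA]
    have hdetB : (A.submatrix Fin.castSucc j0.succAbove).det
        = ∑ i : Fin (m+1), (-1:ℝ)^(m - (i:ℕ)) * A i.castSucc (Fin.last (m+1)) * Dl A (i:ℕ) := by
      rw [ih B hBH]
      refine Finset.sum_congr rfl fun i _ => ?_
      rw [hBlast i, hDlB i (by omega)]
    rw [hdetB]
    -- the principal minor
    have hmin : (A.submatrix Fin.castSucc Fin.castSucc).det = Dl A (m+1) := by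
      rw [Dl_of_le A (by omega : m+1 ≤ m+2)]
      congr 1
    rw [hmin]
    have hA1 : A (Fin.last (m+1)) j0 = 1 := by
      apply hA.1; simp [hj0]
    rw [hA1]
    have hs1 : (-1:ℝ)^((Fin.last (m+1) : ℕ) + (j0:ℕ)) = -1 := by
      simp only [Fin.val_last, hj0]
      exact Odd.neg_one_pow ⟨m, by ring⟩
    have hs2 : (-1:ℝ)^((Fin.last (m+1) : ℕ) + ((Fin.last (m+1)):ℕ)) = 1 := by
      simp only [Fin.val_last]
      exact Even.neg_one_pow ⟨m+1, by ring⟩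
    rw [hs1, hs2, Fin.sum_univ_castSucc
      (f := fun i : Fin (m+2) => (-1:ℝ)^(m+1 - (i:ℕ)) * A i (Fin.last (m+1)) * Dl A (i:ℕ))]
    have hfin : ∀ i : Fin (m+1),
        (-1:ℝ)^(m+1 - ((i.castSucc : Fin (m+2)):ℕ)) * A i.castSucc (Fin.last (m+1)) *
            Dl A ((i.castSucc : Fin (m+2)):ℕ)
        = -((-1:ℝ)^(m - (i:ℕ)) * A i.castSucc (Fin.last (m+1)) * Dl A (i:ℕ)) := by
      intro i
      have hi : (i:ℕ) < m + 1 := i.isLt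
      have hmm : m + 1 - (i:ℕ) = (m - (i:ℕ)) + 1 := by omega
      simp only [Fin.coe_castSucc, hmm, pow_succ]
      ring
    rw [Finset.sum_congr rfl (fun i _ => hfin i), Finset.sum_neg_distrib]
    simp only [Fin.val_last, Nat.sub_self, pow_zero, one_mul]
    ring

-- ## seqMd facts

lemma seqMd_nonneg (d : ℕ) : ∀ n, 0 ≤ seqMd d n := by
  intro n
  induction n using Nat.strong_induction_on with
  | _ n ih =>
    match n with
    | 0 => norm_num [seqMd]
    | 1 => simp [seqMd]
    | 2 => simp only [seqMd]; positivity
    | (k+3) =>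
      have h1 := ih (k+2) (by omega)
      have h2 := ih (k+1) (by omega)
      have hd0 : (0:ℝ) ≤ (d:ℝ) := by positivity
      show (0:ℝ) ≤ (d:ℝ) * seqMd d (k + 2) + seqMd d (k + 1)
      nlinarith

lemma seqMd_le_succ (d : ℕ) (hd : 1 ≤ d) : ∀ n, seqMd d n ≤ seqMd d (n+1) := by
  have hd' : (1:ℝ) ≤ (d:ℝ) := by exact_mod_cast hd
  intro n
  match n with
  | 0 => simpa [seqMd] using hd'
  | 1 => show (d:ℝ) ≤ (d:ℝ)^2; nlinarith
  | 2 =>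
    show (d:ℝ)^2 ≤ (d:ℝ) * (d:ℝ)^2 + (d:ℝ)
    nlinarith
  | (k+3) =>
    have h1 := seqMd_nonneg d (k+3)
    have h2 := seqMd_nonneg d (k+2)
    show seqMd d (k+3) ≤ (d:ℝ) * seqMd d (k + 3) + seqMd d (k + 2)
    nlinarith

lemma seqMd_rec (d m : ℕ) (hm : 1 ≤ m) :
    seqMd d (m+2) = (d:ℝ) * seqMd d (m+1) + seqMd d m := by
  obtain ⟨k, rfl⟩ : ∃ k, m = k + 1 := ⟨m - 1, by omega⟩
  rfl

-- ## potentials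

def Gv (d : ℕ) {n : ℕ} (A : Matrix (Fin n) (Fin n) ℝ) : ℝ :=
  ∑ i : Fin (n+1), (d:ℝ) * max 0 ((-1:ℝ)^(n - (i:ℕ)) * Dl A (i:ℕ))

def Hv (d : ℕ) {n : ℕ} (A : Matrix (Fin n) (Fin n) ℝ) : ℝ :=
  ∑ i : Fin (n+1), (d:ℝ) * max 0 (-((-1:ℝ)^(n - (i:ℕ)) * Dl A (i:ℕ)))

lemma Gv_nonneg (d : ℕ) {n : ℕ} (A : Matrix (Fin n) (Fin n) ℝ) : 0 ≤ Gv d A :=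
  Finset.sum_nonneg fun i _ => mul_nonneg (by positivity) (le_max_left _ _)

lemma Hv_nonneg (d : ℕ) {n : ℕ} (A : Matrix (Fin n) (Fin n) ℝ) : 0 ≤ Hv d A :=
  Finset.sum_nonneg fun i _ => mul_nonneg (by positivity) (le_max_left _ _)

lemma Gv_zero (d : ℕ) (A : Matrix (Fin 0) (Fin 0) ℝ) : Gv d A = d := by
  unfold Gv
  simp [Dl_zero]

lemma Hv_zero (d : ℕ) (A : Matrix (Fin 0) (Fin 0) ℝ) : Hv d A = 0 := by
  unfold Hv
  simp [Dl_zero]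

lemma Gv_succ (d : ℕ) {m : ℕ} (A : Matrix (Fin (m+1)) (Fin (m+1)) ℝ) :
    Gv d A = (d:ℝ) * max 0 A.det + Hv d (lead A (Nat.le_succ m)) := by
  unfold Gv Hv
  rw [Fin.sum_univ_castSucc]
  rw [add_comm]
  congr 1
  · simp [Fin.val_last, Dl_self]
  · refine Finset.sum_congr rfl fun i _ => ?_
    have hi : (i:ℕ) < m+1 := i.isLt
    rw [Dl_lead A (Nat.le_succ m) (by omega : (i:ℕ) ≤ m)]
    have hmm : m + 1 - (i:ℕ) = (m - (i:ℕ)) + 1 := by omega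
    simp only [Fin.coe_castSucc, hmm, pow_succ]
    congr 1
    congr 1
    ring

lemma Hv_succ (d : ℕ) {m : ℕ} (A : Matrix (Fin (m+1)) (Fin (m+1)) ℝ) :
    Hv d A = (d:ℝ) * max 0 (-A.det) + Gv d (lead A (Nat.le_succ m)) := by
  unfold Gv Hv
  rw [Fin.sum_univ_castSucc]
  rw [add_comm]
  congr 1
  · simp [Fin.val_last, Dl_self]
  · refine Finset.sum_congr rfl fun i _ => ?_
    have hi : (i:ℕ) < m+1 := i.isLt
    rw [Dl_lead A (Nat.le_succ m) (by omega : (i:ℕ) ≤ m)]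
    have hmm : m + 1 - (i:ℕ) = (m - (i:ℕ)) + 1 := by omega
    simp only [Fin.coe_castSucc, hmm, pow_succ]
    congr 1
    congr 1
    ring

-- ## termwise bound

lemma term_le (a s dR : ℝ) (ha : 0 ≤ a) (had : a ≤ dR) : a * s ≤ dR * max 0 s := by
  rcases le_or_gt 0 s with h | h
  · calc a * s ≤ dR * s := mul_le_mul_of_nonneg_right had h
      _ ≤ dR * max 0 s := mul_le_mul_of_nonneg_left (le_max_right _ _) (ha.trans had)
  · have h1 : a * s ≤ 0 := mul_nonpos_of_nonneg_of_nonpos ha h.le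
    have h2 : 0 ≤ dR * max 0 s := mul_nonneg (ha.trans had) (le_max_left _ _)
    linarith

lemma det_le_bounds (d : ℕ) {m : ℕ} (A : Matrix (Fin (m+1)) (Fin (m+1)) ℝ)
    (hA : IsUpperHessenbergRange d A) :
    A.det ≤ Gv d (lead A (Nat.le_succ m)) ∧ -A.det ≤ Hv d (lead A (Nat.le_succ m)) := by
  have hent : ∀ i : Fin (m+1), 0 ≤ A i (Fin.last m) ∧ A i (Fin.last m) ≤ (d:ℝ) := by
    intro i
    obtain ⟨k, hk, hAk⟩ := hA.2.2 i (Fin.last m) (by simp [Fin.val_last]; omega)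
    rw [hAk]
    constructor
    · positivity
    · exact_mod_cast hk
  have hGv : Gv d (lead A (Nat.le_succ m))
      = ∑ i : Fin (m+1), (d:ℝ) * max 0 ((-1:ℝ)^(m - (i:ℕ)) * Dl A (i:ℕ)) :=
    Finset.sum_congr rfl fun i _ => by
      rw [Dl_lead A (Nat.le_succ m) (by omega : (i:ℕ) ≤ m)]
  have hHv : Hv d (lead A (Nat.le_succ m))
      = ∑ i : Fin (m+1), (d:ℝ) * max 0 (-((-1:ℝ)^(m - (i:ℕ)) * Dl A (i:ℕ))) :=
    Finset.sum_congr rfl fun i _ => by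
      rw [Dl_lead A (Nat.le_succ m) (by omega : (i:ℕ) ≤ m)]
  rw [det_expand A ⟨hA.1, hA.2.1⟩, hGv, hHv]
  constructor
  · refine Finset.sum_le_sum fun i _ => ?_
    have h := term_le (A i (Fin.last m)) ((-1:ℝ)^(m - (i:ℕ)) * Dl A (i:ℕ)) d
      (hent i).1 (hent i).2
    calc (-1:ℝ)^(m - (i:ℕ)) * A i (Fin.last m) * Dl A (i:ℕ)
        = A i (Fin.last m) * ((-1:ℝ)^(m - (i:ℕ)) * Dl A (i:ℕ)) := by ring
      _ ≤ _ := h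
  · rw [← Finset.sum_neg_distrib]
    refine Finset.sum_le_sum fun i _ => ?_
    have h := term_le (A i (Fin.last m)) (-((-1:ℝ)^(m - (i:ℕ)) * Dl A (i:ℕ))) d
      (hent i).1 (hent i).2
    calc -((-1:ℝ)^(m - (i:ℕ)) * A i (Fin.last m) * Dl A (i:ℕ))
        = A i (Fin.last m) * (-((-1:ℝ)^(m - (i:ℕ)) * Dl A (i:ℕ))) := by ring
      _ ≤ _ := h

-- ## arithmetic step

lemma step_arith (dR : ℝ) (hd : 1 ≤ dR) {M0 M1 M2 : ℝ} (hrec : M2 = dR*M1 + M0)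
    (hmono : M0 ≤ M1) (G0 H0 x : ℝ) (hG0 : 0 ≤ G0) (hH0 : 0 ≤ H0)
    (hxG : x ≤ G0) (hxH : -x ≤ H0) (hG : G0 ≤ M1) (hH : H0 ≤ M0) :
    (dR * max 0 x + H0 ≤ M2 ∧ dR * max 0 (-x) + G0 ≤ M1) ∨
    (dR * max 0 (-x) + G0 ≤ M2 ∧ dR * max 0 x + H0 ≤ M1) := by
  rcases le_or_gt x 0 with hx | hx
  · right
    have hmx : max 0 x = 0 := max_eq_left hx
    have hmnx : max 0 (-x) ≤ H0 := max_le hH0 hxH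
    have hmnx0 : 0 ≤ max 0 (-x) := le_max_left _ _
    constructor
    · nlinarith
    · rw [hmx]; linarith
  · left
    have hmx : max 0 x = x := max_eq_right hx.le
    have hmnx : max 0 (-x) = 0 := max_eq_left (by linarith)
    constructor
    · rw [hmx]; nlinarith
    · rw [hmnx]; linarith

-- ## the invariant

lemma invariant (d : ℕ) (hd : 1 ≤ d) :
    ∀ n (A : Matrix (Fin n) (Fin n) ℝ), IsUpperHessenbergRange d A →
      (Gv d A ≤ seqMd d (n+1) ∧ Hv d A ≤ seqMd d n) ∨
      (Hv d A ≤ seqMd d (n+1) ∧ Gv d A ≤ seqMd d n) := by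
  have hd' : (1:ℝ) ≤ (d:ℝ) := by exact_mod_cast hd
  intro n
  induction n with
  | zero =>
    intro A _
    left
    rw [Gv_zero, Hv_zero]
    constructor
    · simp [seqMd]
    · norm_num [seqMd]
  | succ m ih =>
    intro A hA
    have hlead := hess_lead hA (Nat.le_succ m)
    have hx := det_le_bounds d A hA
    rw [Gv_succ, Hv_succ]
    rcases Nat.eq_zero_or_pos m with rfl | hm
    · -- 1×1 case
      left
      obtain ⟨k, hk, hAk⟩ := hA.2.2 0 0 (le_refl _)
      have hdet : A.det = (k:ℝ) := by rw [Matrix.det_fin_one, hAk]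
      have hk0 : (0:ℝ) ≤ (k:ℝ) := by positivity
      have hkd : (k:ℝ) ≤ (d:ℝ) := by exact_mod_cast hk
      rw [Gv_zero, Hv_zero, hdet]
      constructor
      · show (d:ℝ) * max 0 (k:ℝ) + 0 ≤ (d:ℝ)^2
        rw [max_eq_right hk0]
        nlinarith
      · show (d:ℝ) * max 0 (-(k:ℝ)) + (d:ℝ) ≤ (d:ℝ)
        rw [max_eq_left (by linarith)]
        linarith
    · have hrec := seqMd_rec d m hm
      have hmono := seqMd_le_succ d hd m
      rcases ih (lead A (Nat.le_succ m)) hlead with ⟨h1, h2⟩ | ⟨h1, h2⟩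
      · rcases step_arith (d:ℝ) hd' hrec hmono
            (Gv d (lead A (Nat.le_succ m))) (Hv d (lead A (Nat.le_succ m))) A.det
            (Gv_nonneg d _) (Hv_nonneg d _) hx.1 hx.2 h1 h2 with ⟨hs1, hs2⟩ | ⟨hs1, hs2⟩
        · exact Or.inl ⟨hs1, hs2⟩
        · exact Or.inr ⟨hs1, hs2⟩
      · rcases step_arith (d:ℝ) hd' hrec hmono
            (Hv d (lead A (Nat.le_succ m))) (Gv d (lead A (Nat.le_succ m))) (-A.det)
            (Hv_nonneg d _) (Gv_nonneg d _) hx.2 (by simpa using hx.1) h1 h2 with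
          ⟨hs1, hs2⟩ | ⟨hs1, hs2⟩
        · refine Or.inr ⟨hs1, ?_⟩
          simpa using hs2
        · refine Or.inl ⟨?_, hs2⟩
          simpa using hs1

lemma abs_det_le (d : ℕ) (hd : 1 ≤ d) {m : ℕ} (A : Matrix (Fin (m+1)) (Fin (m+1)) ℝ)
    (hA : IsUpperHessenbergRange d A) : |A.det| ≤ seqMd d (m+1) := by
  have hb := det_le_bounds d A hA
  have hinv := invariant d hd m (lead A (Nat.le_succ m)) (hess_lead hA _)
  have hmono := seqMd_le_succ d hd m
  rw [abs_le]
  rcases hinv with ⟨h1, h2⟩ | ⟨h1, h2⟩ <;> constructor <;> linarith [hb.1, hb.2]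

-- ## extremal matrix

def ExtM (d n : ℕ) : Matrix (Fin n) (Fin n) ℝ := fun i j =>
  if (i:ℕ) = (j:ℕ) + 1 then 1
  else if (i:ℕ) ≤ (j:ℕ) ∧ ((i:ℕ) + (j:ℕ)) % 2 = 0 then (d:ℝ) else 0

lemma extM_hess (d n : ℕ) : IsUpperHessenbergRange d (ExtM d n) := by
  refine ⟨fun i j h => by simp only [ExtM]; rw [if_pos h], fun i j h => ?_, fun i j h => ?_⟩
  · simp only [ExtM]
    rw [if_neg (by omega), if_neg (by omega)]
  · by_cases hc : ((i:ℕ) + (j:ℕ)) % 2 = 0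
    · refine ⟨d, le_refl d, ?_⟩
      simp only [ExtM]
      rw [if_neg (by omega), if_pos ⟨h, hc⟩]
    · refine ⟨0, Nat.zero_le d, ?_⟩
      simp only [ExtM]
      rw [if_neg (by omega), if_neg (by tauto)]
      simp

lemma lead_extM (d n k : ℕ) (h : k ≤ n) : lead (ExtM d n) h = ExtM d k := rfl

lemma sumS (d : ℕ) : ∀ m : ℕ,
    (∑ i : Fin (m+1), (if ((i:ℕ) + m) % 2 = 0 then (d:ℝ) else 0) * seqMd d (i:ℕ))
      = seqMd d (m+1) := by
  intro m
  induction m using Nat.twoStepInduction with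
  | zero => simp [seqMd]
  | one =>
    rw [Fin.sum_univ_two]
    norm_num [seqMd]
    ring
  | more m ih1 _ =>
    rw [Fin.sum_univ_castSucc, Fin.sum_univ_castSucc]
    have hlast : (if (((Fin.last (m+2) : Fin (m+3)):ℕ) + (m+2)) % 2 = 0 then (d:ℝ) else 0)
        * seqMd d ((Fin.last (m+2) : Fin (m+3)):ℕ) = (d:ℝ) * seqMd d (m+2) := by
      simp only [Fin.val_last]
      rw [if_pos (by omega)]
    have hmid : (if ((((Fin.last (m+1)).castSucc : Fin (m+3)):ℕ) + (m+2)) % 2 = 0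
        then (d:ℝ) else 0) * seqMd d (((Fin.last (m+1)).castSucc : Fin (m+3)):ℕ) = 0 := by
      simp only [Fin.coe_castSucc, Fin.val_last]
      rw [if_neg (by omega)]
      ring
    rw [hlast, hmid]
    have hinner : (∑ i : Fin (m+1),
        (if (((i.castSucc.castSucc : Fin (m+3)):ℕ) + (m+2)) % 2 = 0 then (d:ℝ) else 0)
          * seqMd d ((i.castSucc.castSucc : Fin (m+3)):ℕ))
        = ∑ i : Fin (m+1), (if ((i:ℕ) + m) % 2 = 0 then (d:ℝ) else 0) * seqMd d (i:ℕ) := by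
      refine Finset.sum_congr rfl fun i _ => ?_
      simp only [Fin.coe_castSucc]
      congr 1
      by_cases hc : ((i:ℕ) + m) % 2 = 0
      · rw [if_pos (by omega), if_pos hc]
      · rw [if_neg (by omega), if_neg hc]
    rw [hinner, ih1]
    show seqMd d (m+1) + 0 + (d:ℝ) * seqMd d (m+2) = seqMd d (m+3)
    rw [show seqMd d (m+3) = (d:ℝ) * seqMd d (m+2) + seqMd d (m+1) from rfl]
    ring

lemma extM_det (d : ℕ) : ∀ n, (ExtM d n).det = seqMd d n := by
  intro n
  induction n using Nat.strong_induction_on with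
  | _ n ih =>
    match n with
    | 0 => simp [Matrix.det_fin_zero, seqMd]
    | (m+1) =>
      have hH := extM_hess d (m+1)
      rw [det_expand _ ⟨hH.1, hH.2.1⟩]
      have hDl : ∀ i : Fin (m+1), Dl (ExtM d (m+1)) (i:ℕ) = seqMd d (i:ℕ) := by
        intro i
        rw [Dl_of_le _ (by omega : (i:ℕ) ≤ m+1), lead_extM]
        exact ih (i:ℕ) (by omega)
      have hterm : ∀ i : Fin (m+1),
          (-1:ℝ)^(m - (i:ℕ)) * (ExtM d (m+1)) i (Fin.last m) * Dl (ExtM d (m+1)) (i:ℕ)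
          = (if ((i:ℕ) + m) % 2 = 0 then (d:ℝ) else 0) * seqMd d (i:ℕ) := by
        intro i
        rw [hDl i]
        have hi : (i:ℕ) < m + 1 := i.isLt
        have hent : (ExtM d (m+1)) i (Fin.last m)
            = if ((i:ℕ) + m) % 2 = 0 then (d:ℝ) else 0 := by
          simp only [ExtM, Fin.val_last]
          rw [if_neg (by omega)]
          by_cases hc : ((i:ℕ) + m) % 2 = 0
          · rw [if_pos ⟨by omega, hc⟩, if_pos hc]
          · rw [if_neg (by tauto), if_neg hc]
        rw [hent]
        by_cases hc : ((i:ℕ) + m) % 2 = 0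
        · have hev : (-1:ℝ)^(m - (i:ℕ)) = 1 := Even.neg_one_pow (Nat.even_iff.mpr (by omega))
          rw [hev, if_pos hc]
          ring
        · rw [if_neg hc]
          ring
      rw [Finset.sum_congr rfl fun i _ => hterm i, sumS]

end MaxDetAux

theorem max_abs_det_population_zero_to_d (d : ℕ) (hd : 1 ≤ d) :
    ∀ n : ℕ, 1 ≤ n →
      IsGreatest {x : ℝ | ∃ A : Matrix (Fin n) (Fin n) ℝ,
        IsUpperHessenbergRange d A ∧ x = |A.det|} (seqMd d n) := by
  intro n hn
  obtain ⟨m, rfl⟩ : ∃ m, n = m + 1 := ⟨n - 1, by omega⟩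
  constructor
  · exact ⟨MaxDetAux.ExtM d (m+1), MaxDetAux.extM_hess d (m+1),
      by rw [MaxDetAux.extM_det d (m+1), abs_of_nonneg (MaxDetAux.seqMd_nonneg d (m+1))]⟩
  · rintro x ⟨A, hA, rfl⟩
    exact MaxDetAux.abs_det_le d hd A hA
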